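/- arXiv:1409.6380 — 2 statements merged into one kernel-verified Lean document; each statement's English description precedes it below -/
import Mathlib

section
/- For every real number μ and every ε₂ > −0.6, the Kolmogorov distance between the Gaussian distributions N(μ,1) and N(μ,1+ε₂) satisfies d_K(N(μ,1), N(μ,1+ε₂)) ≤ |ε₂|/√(2eπ). -/
open MeasureTheory ProbabilityTheory Real
open scoped NNReal ENNReal

private lemma std_pdf_le {x m : ℝ} (h : |m| ≤ |x|) :
    gaussianPDFReal 0 1 x ≤ gaussianPDFReal 0 1 m := by
  have hm2 : m ^ 2 ≤ x ^ 2 := by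
    rw [← sq_abs m, ← sq_abs x]
    exact pow_le_pow_left₀ (abs_nonneg _) h 2
  simp only [gaussianPDFReal, NNReal.coe_one, mul_one, sub_zero]
  exact mul_le_mul_of_nonneg_left (Real.exp_le_exp.2 (by nlinarith)) (by positivity)

private lemma std_pdf_key (u : ℝ) :
    |u| * gaussianPDFReal 0 1 u ≤ Real.exp (-(1:ℝ)/2) * (Real.sqrt (2 * π))⁻¹ := by
  have hw : |u| * Real.exp (-(u ^ 2) / 2) ≤ Real.exp (-(1:ℝ)/2) := by
    set w := |u| with hwdef
    have hw0 : 0 ≤ w := abs_nonneg u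
    have hsq : u ^ 2 = w ^ 2 := (sq_abs u).symm
    rw [hsq]
    have h1 : w ≤ Real.exp ((w ^ 2 - 1) / 2) := by
      have := Real.add_one_le_exp ((w ^ 2 - 1) / 2)
      nlinarith [sq_nonneg (w - 1)]
    calc w * Real.exp (-(w ^ 2) / 2)
        ≤ Real.exp ((w ^ 2 - 1) / 2) * Real.exp (-(w ^ 2) / 2) := by
          exact mul_le_mul_of_nonneg_right h1 (Real.exp_pos _).le
      _ = Real.exp (-(1:ℝ)/2) := by rw [← Real.exp_add]; ring_nf
  simp only [gaussianPDFReal, NNReal.coe_one, mul_one, sub_zero]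
  calc |u| * ((Real.sqrt (2 * π))⁻¹ * Real.exp (-(u ^ 2) / 2))
      = (|u| * Real.exp (-(u ^ 2) / 2)) * (Real.sqrt (2 * π))⁻¹ := by ring
    _ ≤ Real.exp (-(1:ℝ)/2) * (Real.sqrt (2 * π))⁻¹ := by
        exact mul_le_mul_of_nonneg_right hw (by positivity)

/-- The increment of the standard gaussian cdf is bounded by length times a bound on the pdf. -/
private lemma cdf_incr_le {c d : ℝ} (h : c ≤ d) {m : ℝ}
    (hm : ∀ x ∈ Set.Ioc c d, gaussianPDFReal 0 1 x ≤ gaussianPDFReal 0 1 m) :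
    cdf (gaussianReal 0 1) d - cdf (gaussianReal 0 1) c
      ≤ (d - c) * gaussianPDFReal 0 1 m := by
  have h1 : (1 : ℝ≥0) ≠ 0 := one_ne_zero
  set P := gaussianReal 0 1 with hP
  have hsplit : P (Set.Iic c) + P (Set.Ioc c d) = P (Set.Iic d) := by
    rw [← measure_union (Set.Iic_disjoint_Ioc le_rfl) measurableSet_Ioc,
      Set.Iic_union_Ioc_eq_Iic h]
  have hfin : ∀ s : Set ℝ, P s ≠ ⊤ := fun s => measure_ne_top _ _
  have hdiff : cdf P d - cdf P c = (P (Set.Ioc c d)).toReal := by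
    rw [cdf_eq_real, cdf_eq_real, measureReal_def, measureReal_def, ← hsplit, ENNReal.toReal_add (hfin _) (hfin _)]
    ring
  rw [hdiff, hP, gaussianReal_apply_eq_integral _ h1,
    ENNReal.toReal_ofReal (setIntegral_nonneg measurableSet_Ioc
      (fun x _ => gaussianPDFReal_nonneg _ _ _))]
  calc ∫ x in Set.Ioc c d, gaussianPDFReal 0 1 x
      ≤ ∫ _x in Set.Ioc c d, gaussianPDFReal 0 1 m := by
        refine setIntegral_mono_on ((integrable_gaussianPDFReal 0 1).integrableOn)
          (integrableOn_const ?_) measurableSet_Ioc hm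
        rw [Real.volume_Ioc]; exact ENNReal.ofReal_ne_top
    _ = (d - c) * gaussianPDFReal 0 1 m := by
        rw [setIntegral_const, Real.volume_real_Ioc_of_le h, smul_eq_mul]

/-- Standardization of the gaussian cdf. -/
private lemma cdf_gaussian_std (μ : ℝ) (v : ℝ≥0) (hv : v ≠ 0) (t : ℝ) :
    cdf (gaussianReal μ v) t = cdf (gaussianReal 0 1) ((t - μ) / Real.sqrt v) := by
  have hv0 : (0:ℝ) < (v:ℝ) := by positivity
  have hσ : (0:ℝ) < Real.sqrt v := Real.sqrt_pos.2 hv0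
  have hmap : gaussianReal μ v
      = ((gaussianReal 0 1).map (fun x => Real.sqrt v * x)).map (· + μ) := by
    rw [gaussianReal_map_const_mul, gaussianReal_map_add_const]
    congr 1
    · simp
    · rw [mul_one]
      ext
      simp [Real.sq_sqrt hv0.le]
  have hmeas1 : Measurable (fun x : ℝ => Real.sqrt v * x) := measurable_const_mul _
  have hmeas2 : Measurable (fun x : ℝ => x + μ) := measurable_add_const μ
  rw [cdf_eq_real, cdf_eq_real, measureReal_def, measureReal_def, hmap, Measure.map_apply hmeas2 measurableSet_Iic]
  have h2 : (fun x : ℝ => x + μ) ⁻¹' Set.Iic t = Set.Iic (t - μ) := by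
    ext x; simp [le_sub_iff_add_le]
  rw [h2, Measure.map_apply hmeas1 measurableSet_Iic]
  have h3 : (fun x : ℝ => Real.sqrt v * x) ⁻¹' Set.Iic (t - μ)
      = Set.Iic ((t - μ) / Real.sqrt v) := by
    ext x
    simp only [Set.mem_preimage, Set.mem_Iic]
    rw [le_div_iff₀ hσ, mul_comm]
  rw [h3]

/-- For `ε₂ > −0.6`, the Kolmogorov distance between the Gaussians `N(μ,1)` and
`N(μ,1+ε₂)` is at most `|ε₂|/√(2eπ)`. -/
theorem kolmogorov_dist_gaussian_variance_shift (μ : ℝ) (ε₂ : ℝ) (hε₂ : -0.6 < ε₂) :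
    (⨆ t : ℝ, |cdf (gaussianReal μ 1) t - cdf (gaussianReal μ ((1 + ε₂).toNNReal)) t|)
      ≤ |ε₂| / Real.sqrt (2 * Real.exp 1 * π) := by
  have hs : (0:ℝ) < 1 + ε₂ := by norm_num at hε₂ ⊢; linarith
  set σ : ℝ := Real.sqrt (1 + ε₂) with hσdef
  have hσ : 0 < σ := Real.sqrt_pos.2 hs
  have hσ2 : σ ^ 2 = 1 + ε₂ := Real.sq_sqrt hs.le
  -- The bound B = exp(-1/2)/√(2π) equals 1/√(2eπ)
  set B : ℝ := Real.exp (-(1:ℝ)/2) * (Real.sqrt (2 * π))⁻¹ with hBdef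
  have hB0 : 0 < B := by positivity
  have hBeq : B = 1 / Real.sqrt (2 * Real.exp 1 * π) := by
    have h1 : Real.sqrt (2 * Real.exp 1 * π) = Real.sqrt (2 * π) * Real.sqrt (Real.exp 1) := by
      rw [← Real.sqrt_mul (by positivity)]; ring_nf
    have h2 : Real.sqrt (Real.exp 1) = Real.exp ((1:ℝ)/2) := by
      rw [show Real.exp 1 = (Real.exp ((1:ℝ)/2)) ^ 2 by
        rw [← Real.exp_nat_mul]; norm_num]
      exact Real.sqrt_sq (Real.exp_pos _).le
    rw [h1, h2, hBdef, show -(1:ℝ)/2 = -((1:ℝ)/2) by ring, Real.exp_neg]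
    field_simp
  -- pointwise bound
  refine ciSup_le fun t => ?_
  have h1cdf : cdf (gaussianReal μ 1) t = cdf (gaussianReal 0 1) (t - μ) := by
    rw [cdf_gaussian_std μ 1 one_ne_zero t]
    norm_num
  have h2cdf : cdf (gaussianReal μ ((1 + ε₂).toNNReal)) t
      = cdf (gaussianReal 0 1) ((t - μ) / σ) := by
    rw [cdf_gaussian_std μ _ (Real.toNNReal_pos.2 hs).ne' t, Real.coe_toNNReal _ hs.le]
  rw [h1cdf, h2cdf]
  set a : ℝ := t - μ with hadef
  set b : ℝ := a / σ with hbdef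
  have hab : a = σ * b := by rw [hbdef]; field_simp
  set Φ : ℝ → ℝ := fun x => cdf (gaussianReal 0 1) x with hΦdef
  have hmono : Monotone Φ := monotone_cdf _
  -- r ≤ |ε₂| in both variance cases
  rcases le_or_gt 1 σ with hσ1 | hσ1
  · -- σ ≥ 1, i.e. ε₂ ≥ 0
    have hε0 : 0 ≤ ε₂ := by nlinarith
    have hr : σ - 1 ≤ |ε₂| := by
      rw [abs_of_nonneg hε0]; nlinarith
    rcases le_or_gt 0 a with ha | ha
    · -- 0 ≤ b ≤ a
      have hb0 : 0 ≤ b := div_nonneg ha hσ.le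
      have hba : b ≤ a := by nlinarith
      have hD : Φ a - Φ b ≤ (a - b) * gaussianPDFReal 0 1 b :=
        cdf_incr_le hba fun x hx => std_pdf_le (by
          rw [abs_of_nonneg hb0, abs_of_nonneg (hb0.trans hx.1.le)]; exact hx.1.le)
      rw [abs_of_nonneg (sub_nonneg.2 (hmono hba))]
      calc Φ a - Φ b ≤ (a - b) * gaussianPDFReal 0 1 b := hD
        _ = (σ - 1) * (|b| * gaussianPDFReal 0 1 b) := by
            rw [abs_of_nonneg hb0, hab]; ring
        _ ≤ (σ - 1) * B := by
            exact mul_le_mul_of_nonneg_left (std_pdf_key b) (by linarith)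
        _ ≤ |ε₂| * B := mul_le_mul_of_nonneg_right hr hB0.le
        _ = |ε₂| / Real.sqrt (2 * Real.exp 1 * π) := by rw [hBeq]; ring
    · -- a ≤ b ≤ 0
      have hb0 : b ≤ 0 := div_nonpos_of_nonpos_of_nonneg ha.le hσ.le
      have hba : a ≤ b := by nlinarith
      have hD : Φ b - Φ a ≤ (b - a) * gaussianPDFReal 0 1 b :=
        cdf_incr_le hba fun x hx => std_pdf_le (by
          rw [abs_of_nonpos hb0, abs_of_nonpos (hx.2.trans hb0)]; linarith [hx.2])
      rw [abs_sub_comm, abs_of_nonneg (sub_nonneg.2 (hmono hba))]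
      calc Φ b - Φ a ≤ (b - a) * gaussianPDFReal 0 1 b := hD
        _ = (σ - 1) * (|b| * gaussianPDFReal 0 1 b) := by
            rw [abs_of_nonpos hb0, hab]; ring
        _ ≤ (σ - 1) * B := by
            exact mul_le_mul_of_nonneg_left (std_pdf_key b) (by linarith)
        _ ≤ |ε₂| * B := mul_le_mul_of_nonneg_right hr hB0.le
        _ = |ε₂| / Real.sqrt (2 * Real.exp 1 * π) := by rw [hBeq]; ring
  · -- σ < 1, i.e. ε₂ < 0
    have hεneg : ε₂ < 0 := by nlinarith
    have hε6 : (-0.6 : ℝ) < ε₂ := hε₂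
    have hσε : -ε₂ ≤ σ := by nlinarith [sq_nonneg (σ + ε₂)]
    have hr : (1 - σ) / σ ≤ |ε₂| := by
      rw [abs_of_neg hεneg, div_le_iff₀ hσ]
      nlinarith
    rcases le_or_gt 0 a with ha | ha
    · -- 0 ≤ a ≤ b
      have hb0 : 0 ≤ b := div_nonneg ha hσ.le
      have hba : a ≤ b := by nlinarith
      have hD : Φ b - Φ a ≤ (b - a) * gaussianPDFReal 0 1 a :=
        cdf_incr_le hba fun x hx => std_pdf_le (by
          rw [abs_of_nonneg ha, abs_of_nonneg (ha.trans hx.1.le)]; exact hx.1.le)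
      rw [abs_sub_comm, abs_of_nonneg (sub_nonneg.2 (hmono hba))]
      calc Φ b - Φ a ≤ (b - a) * gaussianPDFReal 0 1 a := hD
        _ = ((1 - σ) / σ) * (|a| * gaussianPDFReal 0 1 a) := by
            rw [abs_of_nonneg ha, hbdef]; field_simp
        _ ≤ ((1 - σ) / σ) * B := by
            exact mul_le_mul_of_nonneg_left (std_pdf_key a)
              (div_nonneg (by linarith) hσ.le)
        _ ≤ |ε₂| * B := mul_le_mul_of_nonneg_right hr hB0.le
        _ = |ε₂| / Real.sqrt (2 * Real.exp 1 * π) := by rw [hBeq]; ring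
    · -- b ≤ a ≤ 0
      have hb0 : b ≤ 0 := div_nonpos_of_nonpos_of_nonneg ha.le hσ.le
      have hba : b ≤ a := by nlinarith
      have hD : Φ a - Φ b ≤ (a - b) * gaussianPDFReal 0 1 a :=
        cdf_incr_le hba fun x hx => std_pdf_le (by
          rw [abs_of_nonpos ha.le, abs_of_nonpos (hx.2.trans ha.le)]; linarith [hx.2])
      rw [abs_of_nonneg (sub_nonneg.2 (hmono hba))]
      calc Φ a - Φ b ≤ (a - b) * gaussianPDFReal 0 1 a := hD
        _ = ((1 - σ) / σ) * (|a| * gaussianPDFReal 0 1 a) := by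
            rw [abs_of_nonpos ha.le, hbdef]; field_simp; ring
        _ ≤ ((1 - σ) / σ) * B := by
            exact mul_le_mul_of_nonneg_left (std_pdf_key a)
              (div_nonneg (by linarith) hσ.le)
        _ ≤ |ε₂| * B := mul_le_mul_of_nonneg_right hr hB0.le
        _ = |ε₂| / Real.sqrt (2 * Real.exp 1 * π) := by rw [hBeq]; ring
end

section
/- For all real numbers ε₁ and all ε₂ > −0.6, the Kolmogorov distance between the standard Gaussian N(0,1) and the Gaussian N(ε₁,1+ε₂) satisfies d_K(N(0,1), N(ε₁,1+ε₂)) ≤ |ε₁|/√(2π) + |ε₂|/√(2eπ). -/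
open MeasureTheory ProbabilityTheory Real

open Set

noncomputable def stdφ : ℝ → ℝ := gaussianPDFReal 0 1

lemma stdφ_eq (x : ℝ) : stdφ x = (Real.sqrt (2 * π))⁻¹ * Real.exp (-x ^ 2 / 2) := by
  simp [stdφ, gaussianPDFReal]

lemma stdφ_nonneg (x : ℝ) : 0 ≤ stdφ x := gaussianPDFReal_nonneg 0 1 x

lemma cdf_std_eq (a : ℝ) :
    cdf (gaussianReal 0 1) a = ∫ x in Iic a, stdφ x := by
  rw [cdf_eq_real, measureReal_def, gaussianReal_apply_eq_integral 0 (by norm_num) _,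
    ENNReal.toReal_ofReal]
  · rfl
  · exact integral_nonneg fun x => stdφ_nonneg x

lemma cdf_std_sub (a b : ℝ) :
    cdf (gaussianReal 0 1) b - cdf (gaussianReal 0 1) a = ∫ x in a..b, stdφ x := by
  rw [cdf_std_eq, cdf_std_eq]
  exact intervalIntegral.integral_Iic_sub_Iic
    ((integrable_gaussianPDFReal 0 1).integrableOn) ((integrable_gaussianPDFReal 0 1).integrableOn)

lemma gaussian_cdf_shift (ε₁ : ℝ) {σ : ℝ} (hσ : 0 < σ) (t : ℝ) :
    cdf (gaussianReal ε₁ ((σ ^ 2 : ℝ).toNNReal)) t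
      = cdf (gaussianReal 0 1) ((t - ε₁) / σ) := by
  have hmap : (gaussianReal 0 1).map (fun x => σ * x + ε₁)
      = gaussianReal ε₁ ((σ ^ 2 : ℝ).toNNReal) := by
    have h1 : (gaussianReal 0 1).map (σ * ·) = gaussianReal 0 ((σ ^ 2 : ℝ).toNNReal) := by
      rw [gaussianReal_map_const_mul σ]
      congr 1
      · ring
      · ext
        simp [Real.toNNReal, max_eq_left (sq_nonneg σ)]
    have : (fun x => σ * x + ε₁) = (· + ε₁) ∘ (σ * ·) := rfl
    rw [this, ← Measure.map_map (by fun_prop) (by fun_prop), h1,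
      gaussianReal_map_add_const, zero_add]
  rw [cdf_eq_real, cdf_eq_real, measureReal_def, measureReal_def, ← hmap,
    Measure.map_apply (by fun_prop) measurableSet_Iic]
  congr 2
  ext x
  simp only [Set.mem_preimage, Set.mem_Iic]
  rw [le_div_iff₀ hσ]; constructor <;> intro h <;> nlinarith

lemma stdφ_anti {a b : ℝ} (h : |a| ≤ |b|) : stdφ b ≤ stdφ a := by
  rw [stdφ_eq, stdφ_eq]
  have h2 : a ^ 2 ≤ b ^ 2 := by
    rw [← sq_abs a, ← sq_abs b]; exact pow_le_pow_left₀ (abs_nonneg a) h 2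
  have := Real.exp_le_exp.mpr (show -b ^ 2 / 2 ≤ -a ^ 2 / 2 by linarith)
  have hc : 0 ≤ (Real.sqrt (2 * π))⁻¹ := by positivity
  exact mul_le_mul_of_nonneg_left this hc

lemma key_ineq {y : ℝ} (hy : 0 ≤ y) :
    y * Real.exp (-y ^ 2 / 2) ≤ Real.exp (-(1 : ℝ) / 2) := by
  have h1 : y ≤ Real.exp ((y ^ 2 - 1) / 2) := by
    have := Real.add_one_le_exp ((y ^ 2 - 1) / 2)
    nlinarith [sq_nonneg (y - 1)]
  calc y * Real.exp (-y ^ 2 / 2) ≤ Real.exp ((y ^ 2 - 1) / 2) * Real.exp (-y ^ 2 / 2) :=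
        mul_le_mul_of_nonneg_right h1 (Real.exp_pos _).le
    _ = Real.exp (-(1 : ℝ) / 2) := by rw [← Real.exp_add]; ring_nf

lemma cdf_std_scale_bound (s : ℝ) {σ : ℝ} (hσ : 0 < σ) (hσ2 : 0.4 < σ ^ 2) :
    |cdf (gaussianReal 0 1) s - cdf (gaussianReal 0 1) (s / σ)|
      ≤ |σ ^ 2 - 1| * (Real.exp (-(1 : ℝ) / 2) * (Real.sqrt (2 * π))⁻¹) := by
  have hc : (0:ℝ) ≤ (Real.sqrt (2 * π))⁻¹ := by positivity
  rcases le_total 1 σ with h1 | h1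
  · -- σ ≥ 1
    have hC : ∀ x ∈ Set.uIoc (s / σ) s, ‖stdφ x‖ ≤ stdφ (s / σ) := by
      intro x hx
      rw [Real.norm_of_nonneg (stdφ_nonneg x)]
      apply stdφ_anti
      rcases le_total 0 s with hs | hs
      · have h2 : s / σ ≤ s := by rw [div_le_iff₀ hσ]; nlinarith
        rw [Set.uIoc_of_le h2] at hx
        have h3 : 0 ≤ s / σ := by positivity
        rw [abs_of_nonneg h3, abs_of_nonneg (h3.trans hx.1.le)]
        exact hx.1.le
      · have h2 : s ≤ s / σ := by rw [le_div_iff₀ hσ]; nlinarith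
        rw [Set.uIoc_comm, Set.uIoc_of_le h2] at hx
        have h3 : s / σ ≤ 0 := div_nonpos_of_nonpos_of_nonneg hs hσ.le
        rw [abs_of_nonpos h3, abs_of_nonpos (hx.2.trans h3)]
        linarith [hx.2]
    have hint := intervalIntegral.norm_integral_le_of_norm_le_const hC
    rw [← cdf_std_sub, Real.norm_eq_abs] at hint
    refine hint.trans ?_
    have habs : |s - s / σ| = |s / σ| * (σ - 1) := by
      have : s - s / σ = (s / σ) * (σ - 1) := by field_simp
      rw [this, abs_mul, abs_of_nonneg (show (0:ℝ) ≤ σ - 1 by linarith)]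
    rw [habs, stdφ_eq]
    have hsq : (s / σ) ^ 2 = |s / σ| ^ 2 := (sq_abs _).symm
    have hk := key_ineq (abs_nonneg (s / σ))
    rw [← hsq] at hk
    have hs1 : σ - 1 ≤ |σ ^ 2 - 1| := by
      rw [abs_of_nonneg (by nlinarith)]; nlinarith
    calc (Real.sqrt (2 * π))⁻¹ * Real.exp (-(s / σ) ^ 2 / 2) * (|s / σ| * (σ - 1))
        = (|s / σ| * Real.exp (-(s / σ) ^ 2 / 2)) * (σ - 1) * (Real.sqrt (2 * π))⁻¹ := by ring
      _ ≤ Real.exp (-(1 : ℝ) / 2) * |σ ^ 2 - 1| * (Real.sqrt (2 * π))⁻¹ := by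
          apply mul_le_mul_of_nonneg_right _ hc
          apply mul_le_mul hk hs1 (by linarith) (Real.exp_pos _).le
      _ = |σ ^ 2 - 1| * (Real.exp (-(1 : ℝ) / 2) * (Real.sqrt (2 * π))⁻¹) := by ring
  · -- σ ≤ 1
    have hσσ : 1 ≤ σ ^ 2 + σ := by nlinarith [sq_nonneg (σ - 0.6)]
    have hC : ∀ x ∈ Set.uIoc (s / σ) s, ‖stdφ x‖ ≤ stdφ s := by
      intro x hx
      rw [Real.norm_of_nonneg (stdφ_nonneg x)]
      apply stdφ_anti
      rcases le_total 0 s with hs | hs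
      · have h2 : s ≤ s / σ := by rw [le_div_iff₀ hσ]; nlinarith
        rw [Set.uIoc_comm, Set.uIoc_of_le h2] at hx
        rw [abs_of_nonneg hs, abs_of_nonneg (hs.trans hx.1.le)]
        exact hx.1.le
      · have h2 : s / σ ≤ s := by rw [div_le_iff₀ hσ]; nlinarith
        rw [Set.uIoc_of_le h2] at hx
        rw [abs_of_nonpos hs, abs_of_nonpos (hx.2.trans hs)]
        linarith [hx.2]
    have hint := intervalIntegral.norm_integral_le_of_norm_le_const hC
    rw [← cdf_std_sub, Real.norm_eq_abs] at hint
    refine hint.trans ?_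
    have habs : |s - s / σ| = |s| * ((1 - σ) / σ) := by
      have : s - s / σ = s * ((σ - 1) / σ) := by field_simp
      rw [this, abs_mul]
      congr 1
      rw [abs_div, abs_of_nonpos (by linarith), abs_of_nonneg hσ.le]
      ring
    rw [habs, stdφ_eq]
    have hsq : s ^ 2 = |s| ^ 2 := (sq_abs _).symm
    have hk := key_ineq (abs_nonneg s)
    rw [← hsq] at hk
    have hs1 : (1 - σ) / σ ≤ |σ ^ 2 - 1| := by
      rw [abs_of_nonpos (by nlinarith), div_le_iff₀ hσ]
      nlinarith
    calc (Real.sqrt (2 * π))⁻¹ * Real.exp (-s ^ 2 / 2) * (|s| * ((1 - σ) / σ))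
        = (|s| * Real.exp (-s ^ 2 / 2)) * ((1 - σ) / σ) * (Real.sqrt (2 * π))⁻¹ := by ring
      _ ≤ Real.exp (-(1 : ℝ) / 2) * |σ ^ 2 - 1| * (Real.sqrt (2 * π))⁻¹ := by
          apply mul_le_mul_of_nonneg_right _ hc
          apply mul_le_mul hk hs1 (div_nonneg (by linarith) hσ.le) (Real.exp_pos _).le
      _ = |σ ^ 2 - 1| * (Real.exp (-(1 : ℝ) / 2) * (Real.sqrt (2 * π))⁻¹) := by ring

lemma cdf_std_lip (a b : ℝ) :
    |cdf (gaussianReal 0 1) b - cdf (gaussianReal 0 1) a|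
      ≤ |b - a| * (Real.sqrt (2 * π))⁻¹ := by
  have hC : ∀ x ∈ Set.uIoc a b, ‖stdφ x‖ ≤ (Real.sqrt (2 * π))⁻¹ := by
    intro x _
    rw [Real.norm_of_nonneg (stdφ_nonneg x), stdφ_eq]
    calc (Real.sqrt (2 * π))⁻¹ * Real.exp (-x ^ 2 / 2)
        ≤ (Real.sqrt (2 * π))⁻¹ * 1 := by
          apply mul_le_mul_of_nonneg_left _ (by positivity)
          rw [Real.exp_le_one_iff]
          nlinarith [sq_nonneg x]
      _ = (Real.sqrt (2 * π))⁻¹ := mul_one _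
  have hint := intervalIntegral.norm_integral_le_of_norm_le_const hC
  rw [← cdf_std_sub, Real.norm_eq_abs] at hint
  linarith [hint]

/-- For all `ε₁` and `ε₂ > −0.6`, the Kolmogorov distance between the standard Gaussian
`N(0,1)` and the Gaussian `N(ε₁,1+ε₂)` is at most `|ε₁|/√(2π) + |ε₂|/√(2eπ)`. -/
theorem kolmogorov_dist_gaussian_mean_variance_shift (ε₁ ε₂ : ℝ) (hε₂ : -0.6 < ε₂) :
    (⨆ t : ℝ, |cdf (gaussianReal 0 1) t - cdf (gaussianReal ε₁ ((1 + ε₂).toNNReal)) t|)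
      ≤ |ε₁| / Real.sqrt (2 * π) + |ε₂| / Real.sqrt (2 * Real.exp 1 * π) := by
  have hv : (0:ℝ) < 1 + ε₂ := by linarith
  set σ : ℝ := Real.sqrt (1 + ε₂) with hσdef
  have hσpos : 0 < σ := Real.sqrt_pos.mpr hv
  have hσsq : σ ^ 2 = 1 + ε₂ := Real.sq_sqrt hv.le
  have hσ2 : 0.4 < σ ^ 2 := by rw [hσsq]; linarith
  have hV : (1 + ε₂).toNNReal = ((σ ^ 2 : ℝ)).toNNReal := by rw [hσsq]
  have hsqrt2eπ : Real.sqrt (2 * Real.exp 1 * π)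
      = Real.sqrt (Real.exp 1) * Real.sqrt (2 * π) := by
    rw [← Real.sqrt_mul (Real.exp_pos 1).le]; ring_nf
  have hexp : Real.exp (-(1 : ℝ) / 2) = (Real.sqrt (Real.exp 1))⁻¹ := by
    rw [← Real.exp_half 1, ← Real.exp_neg]
    norm_num
  apply Real.iSup_le _ (by positivity)
  intro t
  rw [hV, gaussian_cdf_shift ε₁ hσpos t]
  set s : ℝ := t - ε₁ with hsdef
  calc |cdf (gaussianReal 0 1) t - cdf (gaussianReal 0 1) (s / σ)|
      ≤ |cdf (gaussianReal 0 1) t - cdf (gaussianReal 0 1) s|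
        + |cdf (gaussianReal 0 1) s - cdf (gaussianReal 0 1) (s / σ)| := abs_sub_le _ _ _
    _ ≤ |t - s| * (Real.sqrt (2 * π))⁻¹
        + |σ ^ 2 - 1| * (Real.exp (-(1 : ℝ) / 2) * (Real.sqrt (2 * π))⁻¹) :=
        add_le_add (by simpa [abs_sub_comm] using cdf_std_lip s t)
          (cdf_std_scale_bound s hσpos hσ2)
    _ = |ε₁| / Real.sqrt (2 * π) + |ε₂| / Real.sqrt (2 * Real.exp 1 * π) := by
        have h1 : t - s = ε₁ := by ring
        have h2 : σ ^ 2 - 1 = ε₂ := by rw [hσsq]; ring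
        rw [h1, h2, hsqrt2eπ, hexp, div_eq_mul_inv, div_eq_mul_inv, mul_inv]
end
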